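/- Let V be C², convex, even, V(0)=0, satisfying the local behavior hypothesis with constants C₀ > 0 and α > 0. For M > 0 there exists an even C² convex function V_M : ℝ → [0,∞) and positive constants c, C, R such that: (i) V_M(z) = V(z) for all |z| ≤ M; (ii) V_M'(z) ≥ c z^{1+α} for all z ≥ R; (iii) |V_M'(z)| ≤ C e^{z²} for all z ≥ R. In particular V_M again satisfies the regularity and local-behavior hypotheses. -/

import Mathlib

open intervalIntegral MeasureTheory Set

/-- derivative of a monotone function is nonnegative -/
lemma stmt10_mono_deriv_nonneg {g : ℝ → ℝ} (hg : Monotone g) (x : ℝ) : 0 ≤ deriv g x := by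
  by_cases hd : DifferentiableAt ℝ g x
  · have h := hasDerivAt_iff_tendsto_slope.mp hd.hasDerivAt
    refine ge_of_tendsto h ?_
    filter_upwards [self_mem_nhdsWithin] with y hy
    have hy' : y ≠ x := hy
    rcases lt_or_gt_of_ne hy' with h1 | h1
    · have : g y ≤ g x := hg h1.le
      simp only [slope_def_field]
      exact div_nonneg_of_nonpos (by linarith) (by linarith)
    · have : g x ≤ g y := hg h1.le
      simp only [slope_def_field]
      exact div_nonneg (by linarith) (by linarith)
  · simp [deriv_zero_of_not_differentiableAt hd]

set_option maxHeartbeats 3200000 in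
theorem stmt_10
    (V : ℝ → ℝ) (C₀ α M : ℝ) (hC₀ : 0 < C₀) (hα : 0 < α) (hM : 0 < M)
    (hV2 : ContDiff ℝ 2 V) (hconv : ConvexOn ℝ Set.univ V)
    (heven : ∀ z : ℝ, V (-z) = V z) (hV0 : V 0 = 0) (hVnn : ∀ z : ℝ, 0 ≤ V z)
    (hloc : ∀ δ > (0:ℝ), ∃ l₀ > (0:ℝ), ∀ l : ℝ, 0 < l → l < l₀ →
      ∀ z : ℝ, |z| ≤ 1 →
        |deriv V (l * z) / l ^ (1 + α) - C₀ * |z| ^ (1 + α) * Real.sign z| < δ) :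
    ∃ (VM : ℝ → ℝ) (c C R : ℝ), 0 < c ∧ 0 < C ∧ 0 < R ∧
      ContDiff ℝ 2 VM ∧ ConvexOn ℝ Set.univ VM ∧
      (∀ z : ℝ, VM (-z) = VM z) ∧ (∀ z : ℝ, 0 ≤ VM z) ∧ VM 0 = 0 ∧
      (∀ z : ℝ, |z| ≤ M → VM z = V z) ∧
      (∀ z : ℝ, R ≤ z → c * z ^ (1 + α) ≤ deriv VM z) ∧
      (∀ z : ℝ, R ≤ z → |deriv VM z| ≤ C * Real.exp (z ^ 2)) ∧
      (∀ δ > (0:ℝ), ∃ l₀ > (0:ℝ), ∀ l : ℝ, 0 < l → l < l₀ →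
        ∀ z : ℝ, |z| ≤ 1 →
          |deriv VM (l * z) / l ^ (1 + α) - C₀ * |z| ^ (1 + α) * Real.sign z| < δ) := by
  -- basic regularity facts
  have h2 : (2 : WithTop ℕ∞) = 1 + 1 := by norm_num
  have hV1 : ContDiff ℝ 1 (deriv V) := by
    rw [h2, contDiff_succ_iff_deriv] at hV2
    exact hV2.2.2
  have hVd : Differentiable ℝ V := by
    rw [h2, contDiff_succ_iff_deriv] at hV2
    exact hV2.1
  have hWd : Differentiable ℝ (deriv V) := (contDiff_one_iff_deriv.mp hV1).1
  have hW2c : Continuous (deriv (deriv V)) := (contDiff_one_iff_deriv.mp hV1).2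
  have hW1c : Continuous (deriv V) := hV1.continuous
  -- second derivative is nonnegative
  have hmono : Monotone (deriv V) := by
    have := hconv.monotoneOn_deriv (fun x _ => hVd x)
    rwa [monotoneOn_univ] at this
  have hW2nn : ∀ t : ℝ, 0 ≤ deriv (deriv V) t := stmt10_mono_deriv_nonneg hmono
  -- deriv V is odd, deriv V 0 = 0
  have hVodd : ∀ x : ℝ, deriv V (-x) = -deriv V x := by
    intro x
    have h1 : (fun y : ℝ => V (-y)) = V := funext heven
    have h2 := deriv_comp_neg (f := V) (x := x)
    rw [h1] at h2
    linarith
  have hd0 : deriv V 0 = 0 := by have := hVodd 0; rw [neg_zero] at this; linarith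
  -- the modified second derivative
  set H : ℝ → ℝ := fun t => if |t| ≤ M then deriv (deriv V) |t| else deriv (deriv V) M + (|t| - M) ^ α with hHdef
  have hHc : Continuous H := by
    apply Continuous.if_le
    · exact hW2c.comp continuous_abs
    · exact continuous_const.add
        ((Real.continuous_rpow_const hα.le).comp (continuous_abs.sub continuous_const))
    · exact continuous_abs
    · exact continuous_const
    · intro t ht
      rw [ht, sub_self, Real.zero_rpow hα.ne', add_zero]
  have hH0 : ∀ t : ℝ, 0 ≤ H t := by
    intro t
    by_cases h : |t| ≤ M
    · simp only [hHdef, if_pos h]; exact hW2nn _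
    · simp only [hHdef, if_neg h]
      exact add_nonneg (hW2nn _) (Real.rpow_nonneg (by push_neg at h; linarith) _)
  have hHeven : ∀ t : ℝ, H (-t) = H t := by intro t; simp only [hHdef, abs_neg]
  -- the modified potential and its derivative
  set A : ℝ → ℝ := fun z => ∫ t in (0:ℝ)..z, H t with hAdef
  set B : ℝ → ℝ := fun z => ∫ t in (0:ℝ)..z, t * H t with hBdef
  set VM : ℝ → ℝ := fun z => z * A z - B z with hVMdef
  have hA : ∀ z : ℝ, HasDerivAt A (H z) z := fun z => (hHc.integral_hasStrictDerivAt 0 z).hasDerivAt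
  have hB : ∀ z : ℝ, HasDerivAt B (z * H z) z := fun z =>
    ((continuous_id.mul hHc).integral_hasStrictDerivAt 0 z).hasDerivAt
  have hVM' : ∀ z : ℝ, HasDerivAt VM (A z) z := by
    intro z
    have h := ((hasDerivAt_id z).mul (hA z)).sub (hB z)
    have heq : 1 * A z + id z * H z - z * H z = A z := by simp only [id_eq, one_mul]; ring
    rw [heq] at h
    exact h
  have hderivVM : deriv VM = A := funext fun z => (hVM' z).deriv
  have hderivA : deriv A = H := funext fun z => (hA z).deriv
  have hVMdiff : Differentiable ℝ VM := fun z => (hVM' z).differentiableAt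
  have hAdiff : Differentiable ℝ A := fun z => (hA z).differentiableAt
  -- C² regularity
  have hVM2 : ContDiff ℝ 2 VM := by
    rw [h2, contDiff_succ_iff_deriv]
    refine ⟨hVMdiff, by simp, ?_⟩
    rw [hderivVM, contDiff_one_iff_deriv, hderivA]
    exact ⟨hAdiff, hHc⟩
  -- convexity
  have hVMconv : ConvexOn ℝ Set.univ VM := by
    apply convexOn_univ_of_deriv2_nonneg hVMdiff
    · rw [hderivVM]; exact hAdiff
    · intro x
      have : deriv^[2] VM x = H x := by
        simp only [Function.iterate_succ, Function.iterate_one, Function.comp_apply,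
          Function.iterate_zero, id_eq]
        rw [hderivVM, hderivA]
      rw [this]
      exact hH0 x
  -- evenness
  have hAodd : ∀ z : ℝ, A (-z) = -A z := by
    intro z
    have h1 : (∫ x in (0:ℝ)..z, H (-x)) = ∫ x in (-z)..(0:ℝ), H x := by
      simpa using intervalIntegral.integral_comp_neg (a := (0:ℝ)) (b := z) (f := H)
    have h2 : (∫ x in (0:ℝ)..z, H (-x)) = A z := by
      simp only [hAdef]; congr 1; funext x; exact hHeven x
    rw [h2] at h1
    rw [intervalIntegral.integral_symm] at h1
    simp only [hAdef]
    linarith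
  have hBeven : ∀ z : ℝ, B (-z) = B z := by
    intro z
    have h1 : (∫ x in (0:ℝ)..z, (-x) * H (-x)) = ∫ x in (-z)..(0:ℝ), x * H x := by
      simpa using intervalIntegral.integral_comp_neg (a := (0:ℝ)) (b := z) (f := fun t => t * H t)
    have h2 : (∫ x in (0:ℝ)..z, (-x) * H (-x)) = -B z := by
      rw [hBdef]
      rw [← intervalIntegral.integral_neg]
      congr 1; funext x; rw [hHeven]; ring
    rw [h2, intervalIntegral.integral_symm] at h1
    simp only [hBdef] at h1 ⊢
    linarith
  have hVMeven : ∀ z : ℝ, VM (-z) = VM z := by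
    intro z
    simp only [hVMdef]
    rw [hAodd, hBeven]
    ring
  have hVM0 : VM 0 = 0 := by simp [hVMdef, hAdef, hBdef]
  -- integral representation and nonnegativity
  have hrep : ∀ z : ℝ, VM z = ∫ t in (0:ℝ)..z, (z - t) * H t := by
    intro z
    have h1 : (∫ t in (0:ℝ)..z, (z - t) * H t)
        = (∫ t in (0:ℝ)..z, z * H t) - ∫ t in (0:ℝ)..z, t * H t := by
      have hs := intervalIntegral.integral_sub (μ := MeasureTheory.volume) (a := (0:ℝ)) (b := z)
        (f := fun t => z * H t) (g := fun t => t * H t)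
        ((continuous_const.mul hHc).intervalIntegrable _ _)
        ((continuous_id'.mul hHc).intervalIntegrable _ _)
      rw [← hs]
      congr 1; funext t; ring
    rw [h1, intervalIntegral.integral_const_mul]
  have hVMnn : ∀ z : ℝ, 0 ≤ VM z := by
    have key : ∀ z : ℝ, 0 ≤ z → 0 ≤ VM z := by
      intro z hz
      rw [hrep]
      apply intervalIntegral.integral_nonneg hz
      intro u hu
      exact mul_nonneg (by linarith [hu.2]) (hH0 u)
    intro z
    rcases le_or_gt 0 z with hz | hz
    · exact key z hz
    · rw [← hVMeven]; exact key (-z) (by linarith)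
  -- agreement with V on [0, M]
  have hA_eq : ∀ z ∈ Icc (0:ℝ) M, A z = deriv V z := by
    intro z hz
    have h1 : A z = ∫ t in (0:ℝ)..z, deriv (deriv V) t := by
      simp only [hAdef]
      apply intervalIntegral.integral_congr
      intro t ht
      rw [uIcc_of_le hz.1] at ht
      have habs : |t| = t := abs_of_nonneg ht.1
      have : |t| ≤ M := by rw [habs]; linarith [ht.2, hz.2]
      simp only [hHdef, if_pos this, habs]
    rw [h1, intervalIntegral.integral_deriv_eq_sub (fun x _ => hWd x)
      (hW2c.intervalIntegrable _ _), hd0, sub_zero]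
  have hVM_eq : ∀ z : ℝ, |z| ≤ M → VM z = V z := by
    have key : ∀ z ∈ Icc (0:ℝ) M, VM z = V z := by
      intro z hz
      have h1 : (∫ t in (0:ℝ)..z, A t) = VM z - VM 0 :=
        intervalIntegral.integral_eq_sub_of_hasDerivAt (fun x _ => hVM' x)
          (hAdiff.continuous.intervalIntegrable _ _)
      have h2 : (∫ t in (0:ℝ)..z, deriv V t) = V z - V 0 :=
        intervalIntegral.integral_deriv_eq_sub (fun x _ => hVd x)
          (hW1c.intervalIntegrable _ _)
      have h3 : (∫ t in (0:ℝ)..z, A t) = ∫ t in (0:ℝ)..z, deriv V t := by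
        apply intervalIntegral.integral_congr
        intro t ht
        rw [uIcc_of_le hz.1] at ht
        exact hA_eq t ⟨ht.1, le_trans ht.2 hz.2⟩
      rw [h3, h2] at h1
      rw [hV0, hVM0] at *
      linarith
    intro z hz
    rcases le_or_gt 0 z with h0 | h0
    · exact key z ⟨h0, by rwa [abs_of_nonneg h0] at hz⟩
    · rw [← hVMeven, ← heven]
      exact key (-z) ⟨by linarith, by rwa [abs_of_neg h0] at hz⟩
  -- derivative agreement on [-M, M]
  have hderiv_eq : ∀ x : ℝ, |x| ≤ M → deriv VM x = deriv V x := by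
    intro x hx
    rw [hderivVM]
    rcases le_or_gt 0 x with h0 | h0
    · exact hA_eq x ⟨h0, by rwa [abs_of_nonneg h0] at hx⟩
    · have h1 : A (-x) = deriv V (-x) :=
        hA_eq (-x) ⟨by linarith, by rwa [abs_of_neg h0] at hx⟩
      have h2 := hAodd (-x); rw [neg_neg] at h2
      rw [h2, h1, hVodd]; ring
  -- splitting the integral
  have hsplit : ∀ z : ℝ, A z = (∫ t in (0:ℝ)..M, H t) + ∫ t in M..z, H t := by
    intro z
    exact (intervalIntegral.integral_add_adjacent_intervals (hHc.intervalIntegrable _ _)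
      (hHc.intervalIntegrable _ _)).symm
  set K := ∫ t in (0:ℝ)..M, H t with hKdef
  have hK : 0 ≤ K := intervalIntegral.integral_nonneg hM.le fun u _ => hH0 u
  set D := deriv (deriv V) M with hDdef
  have hD : 0 ≤ D := hW2nn M
  have hα1 : (0:ℝ) < α + 1 := by linarith
  have hrpc : Continuous (fun t : ℝ => (t - M) ^ α) :=
    (Real.continuous_rpow_const hα.le).comp (continuous_id'.sub continuous_const)
  have hrpowint : ∀ z : ℝ, (∫ t in M..z, (t - M) ^ α) = (z - M) ^ (α + 1) / (α + 1) := by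
    intro z
    rw [intervalIntegral.integral_comp_sub_right (fun u => u ^ α) M, sub_self,
      _root_.integral_rpow (Or.inl (by linarith)),
      Real.zero_rpow (by positivity), sub_zero]
  -- lower bound for the tail integral
  have hlow : ∀ z : ℝ, M ≤ z → (z - M) ^ (α + 1) / (α + 1) ≤ ∫ t in M..z, H t := by
    intro z hz
    rw [← hrpowint z]
    apply intervalIntegral.integral_mono_on hz (hrpc.intervalIntegrable _ _)
      (hHc.intervalIntegrable _ _)
    intro t ht
    by_cases h : |t| ≤ M
    · have htM : t = M := le_antisymm ((le_abs_self t).trans h) ht.1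
      rw [htM, sub_self, Real.zero_rpow hα.ne']
      exact hH0 M
    · simp only [hHdef, if_neg h]
      have habs : |t| = t := abs_of_nonneg (le_trans hM.le ht.1)
      rw [habs]
      linarith [hW2nn M]
  -- upper bound for the tail integral
  have hup : ∀ z : ℝ, M ≤ z →
      (∫ t in M..z, H t) ≤ D * (z - M) + (z - M) ^ (α + 1) / (α + 1) := by
    intro z hz
    have h1 : (∫ t in M..z, H t) ≤ ∫ t in M..z, (D + (t - M) ^ α) := by
      apply intervalIntegral.integral_mono_on hz (hHc.intervalIntegrable _ _)
        ((continuous_const.add hrpc).intervalIntegrable _ _)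
      intro t ht
      have habs : |t| = t := abs_of_nonneg (le_trans hM.le ht.1)
      by_cases h : |t| ≤ M
      · have htM : t = M := le_antisymm ((le_abs_self t).trans h) ht.1
        have hHt : H t = D := by simp only [hHdef]; rw [if_pos h, habs, htM]
        rw [hHt, htM]; show D ≤ D + (M - M) ^ α; rw [sub_self, Real.zero_rpow hα.ne', add_zero]
      · simp only [hHdef, if_neg h, habs]
        exact le_rfl
    have h2 : (∫ t in M..z, (D + (t - M) ^ α))
        = D * (z - M) + (z - M) ^ (α + 1) / (α + 1) := by
      rw [intervalIntegral.integral_add (intervalIntegrable_const)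
        (hrpc.intervalIntegrable _ _), hrpowint z, intervalIntegral.integral_const,
        smul_eq_mul, mul_comm]
    linarith
  -- constants
  set R := 2 * M + α + 2 with hRdef
  have hR : 0 < R := by rw [hRdef]; linarith
  set c := ((α + 1) * 2 ^ (α + 1))⁻¹ with hcdef
  have h2pow : (0:ℝ) < 2 ^ (α + 1) := Real.rpow_pos_of_pos two_pos _
  have hc : 0 < c := by rw [hcdef]; positivity
  set Cc := K + D + 1 / (α + 1) + 1 with hCcdef
  have hCc : 0 < Cc := by rw [hCcdef]; positivity
  -- lower growth bound
  have hlower : ∀ z : ℝ, R ≤ z → c * z ^ (1 + α) ≤ deriv VM z := by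
    intro z hz
    have hz2M : 2 * M ≤ z := by rw [hRdef] at hz; linarith
    have hzpos : 0 < z := lt_of_lt_of_le (by rw [hRdef]; linarith) hz
    rw [hderivVM, hsplit z]
    have l2 : (z / 2) ^ (α + 1) ≤ (z - M) ^ (α + 1) :=
      Real.rpow_le_rpow (by linarith) (by linarith) (by linarith)
    have l3 : (z / 2) ^ (α + 1) = z ^ (α + 1) / 2 ^ (α + 1) :=
      Real.div_rpow hzpos.le (by norm_num) (α + 1)
    have l4 : c * z ^ (1 + α) = (z / 2) ^ (α + 1) / (α + 1) := by
      rw [add_comm 1 α, l3, hcdef, mul_inv]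
      ring
    have l5 : (z / 2) ^ (α + 1) / (α + 1) ≤ (z - M) ^ (α + 1) / (α + 1) :=
      div_le_div_of_nonneg_right l2 hα1.le
    have l6 := hlow z (by linarith)
    linarith
  -- upper growth bound
  have hupper : ∀ z : ℝ, R ≤ z → |deriv VM z| ≤ Cc * Real.exp (z ^ 2) := by
    intro z hz
    have hz1 : (1:ℝ) ≤ z := by rw [hRdef] at hz; linarith
    have hzα : α + 1 ≤ z := by rw [hRdef] at hz; linarith
    have hzM : M ≤ z := by rw [hRdef] at hz; linarith
    rw [hderivVM]
    have hAnn : 0 ≤ A z := intervalIntegral.integral_nonneg (by linarith) fun u _ => hH0 u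
    rw [abs_of_nonneg hAnn, hsplit z]
    set E := Real.exp (z ^ 2) with hEdef
    have hE1 : (1:ℝ) ≤ E := Real.one_le_exp (by positivity)
    have hzE : z ≤ E := by
      have h1 : z ≤ Real.exp z := by linarith [Real.add_one_le_exp z]
      have h2 : Real.exp z ≤ E := Real.exp_le_exp.mpr (by nlinarith)
      linarith
    have hrp : (z - M) ^ (α + 1) ≤ E := by
      have h1 : (z - M) ^ (α + 1) ≤ z ^ (α + 1) :=
        Real.rpow_le_rpow (by linarith) (by linarith) (by linarith)
      have hlog : Real.log z ≤ z := (Real.log_le_sub_one_of_pos (by linarith)).trans (by linarith)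
      have hlognn : 0 ≤ Real.log z := Real.log_nonneg hz1
      have h3 : Real.log z * (α + 1) ≤ z ^ 2 := by nlinarith
      calc (z - M) ^ (α + 1) ≤ z ^ (α + 1) := h1
        _ = Real.exp (Real.log z * (α + 1)) := by rw [Real.rpow_def_of_pos (by linarith)]
        _ ≤ E := Real.exp_le_exp.mpr (by nlinarith)
    have f1 : K ≤ K * E := le_mul_of_one_le_right hK hE1
    have f2 : D * (z - M) ≤ D * E := mul_le_mul_of_nonneg_left (by linarith) hD
    have f3 : (z - M) ^ (α + 1) / (α + 1) ≤ 1 / (α + 1) * E := by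
      rw [one_div, inv_mul_eq_div]
      exact div_le_div_of_nonneg_right hrp hα1.le
    have hint := hup z hzM
    have hCcE : Cc * E = K * E + D * E + 1 / (α + 1) * E + E := by rw [hCcdef]; ring
    calc K + (∫ t in M..z, H t)
        ≤ K + (D * (z - M) + (z - M) ^ (α + 1) / (α + 1)) := by linarith
      _ ≤ K * E + (D * E + 1 / (α + 1) * E) := by linarith
      _ ≤ Cc * E := by linarith
  -- localization property for VM
  have hlocVM : ∀ δ > (0:ℝ), ∃ l₀ > (0:ℝ), ∀ l : ℝ, 0 < l → l < l₀ →
      ∀ z : ℝ, |z| ≤ 1 →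
        |deriv VM (l * z) / l ^ (1 + α) - C₀ * |z| ^ (1 + α) * Real.sign z| < δ := by
    intro δ hδ
    obtain ⟨l₀, hl₀, hl⟩ := hloc δ hδ
    refine ⟨min l₀ M, lt_min hl₀ hM, ?_⟩
    intro l hlpos hlt z hz
    have h1 : |l * z| ≤ M := by
      rw [abs_mul, abs_of_pos hlpos]
      calc l * |z| ≤ l * 1 := by nlinarith [abs_nonneg z]
        _ = l := mul_one l
        _ ≤ M := le_of_lt (lt_of_lt_of_le hlt (min_le_right _ _))
    rw [hderiv_eq _ h1]
    exact hl l hlpos (lt_of_lt_of_le hlt (min_le_left _ _)) z hz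
  exact ⟨VM, c, Cc, R, hc, hCc, hR, hVM2, hVMconv, hVMeven, hVMnn, hVM0, hVM_eq,
    hlower, hupper, hlocVM⟩
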